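/- For 0 < ε < L/3 and λ > 0, with ζ = 1 - e^{-λε}, the bounds |ζ·b₄| < 2/3 and |ζ·b₅| < 1 hold, where b₄ = -2e^{-λL}/(1 - e^{-λL}) and b₅ = -4e^{-2λL}/((1 - e^{-λL})(1 + 3e^{-λL})). -/
import Mathlib


open Real

/-- For 0 < ε < L/3 and λ > 0, with ζ = 1 - e^{-λε},
|ζ b₄| < 2/3 and |ζ b₅| < 1. -/
theorem zeta_b_bounds (L ε lam : ℝ) (hL : 0 < L) (hε : 0 < ε) (hεL : ε < L / 3)
    (hlam : 0 < lam) :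
    let ζ : ℝ := 1 - exp (-lam * ε)
    let b₄ : ℝ := -2 * exp (-lam * L) / (1 - exp (-lam * L))
    let b₅ : ℝ := -4 * exp (-2 * lam * L) / ((1 - exp (-lam * L)) * (1 + 3 * exp (-lam * L)))
    |ζ * b₄| < 2 / 3 ∧ |ζ * b₅| < 1 := by
  intro ζ b₄ b₅
  set x : ℝ := exp (-lam * (L / 3)) with hxdef
  set z : ℝ := exp (-lam * ε) with hzdef
  have hq : exp (-lam * L) = x ^ 3 := by
    rw [hxdef, ← Real.exp_nat_mul]
    congr 1
    push_cast
    ring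
  have hq2 : exp (-2 * lam * L) = x ^ 6 := by
    rw [hxdef, ← Real.exp_nat_mul]
    congr 1
    push_cast
    ring
  have hx0 : 0 < x := exp_pos _
  have hx1 : x < 1 := by
    rw [hxdef, exp_lt_one_iff]
    nlinarith
  have hz1 : z < 1 := by
    rw [hzdef, exp_lt_one_iff]
    nlinarith
  have hxz : x < z := by
    rw [hxdef, hzdef, exp_lt_exp]
    nlinarith
  have hz0 : 0 < z := exp_pos _
  have hx3 : x ^ 3 < 1 := pow_lt_one₀ hx0.le hx1 (by norm_num)
  have hd1 : 0 < 1 - x ^ 3 := by linarith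
  have hd2 : 0 < 1 + 3 * x ^ 3 := by positivity
  have hx3x : x ^ 3 < x := by
    nlinarith [mul_pos (mul_pos hx0 (sub_pos.2 hx1)) (show (0:ℝ) < 1 + x by linarith)]
  have hzx3 : x ^ 3 < z := lt_trans hx3x hxz
  constructor
  · have hb4 : ζ * b₄ = -(2 * (1 - z) * x ^ 3 / (1 - x ^ 3)) := by
      show (1 - z) * (-2 * exp (-lam * L) / (1 - exp (-lam * L))) = _
      rw [hq]; ring
    have hnn : 0 ≤ 2 * (1 - z) * x ^ 3 / (1 - x ^ 3) :=
      div_nonneg (by nlinarith [mul_nonneg (sub_nonneg.2 hz1.le) (pow_pos hx0 3).le]) hd1.le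
    rw [hb4, abs_neg, abs_of_nonneg hnn, div_lt_iff₀ hd1]
    nlinarith [mul_pos (sub_pos.2 hx1) hd1,
      mul_nonneg (sub_nonneg.2 hx1.le) (sub_nonneg.2 hx3x.le),
      mul_nonneg (sub_nonneg.2 hx1.le) (sub_nonneg.2 (show x ^ 3 ≤ x ^ 2 by nlinarith [sq_nonneg x])),
      mul_pos (sub_pos.2 hxz) (pow_pos hx0 3)]
  · have hb5 : ζ * b₅ = -(4 * (1 - z) * x ^ 6 / ((1 - x ^ 3) * (1 + 3 * x ^ 3))) := by
      show (1 - z) * (-4 * exp (-2 * lam * L) / ((1 - exp (-lam * L)) * (1 + 3 * exp (-lam * L)))) = _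
      rw [hq, hq2]; ring
    have hd : 0 < (1 - x ^ 3) * (1 + 3 * x ^ 3) := mul_pos hd1 hd2
    have hnn : 0 ≤ 4 * (1 - z) * x ^ 6 / ((1 - x ^ 3) * (1 + 3 * x ^ 3)) :=
      div_nonneg (by nlinarith [mul_nonneg (sub_nonneg.2 hz1.le) (pow_pos hx0 6).le]) hd.le
    rw [hb5, abs_neg, abs_of_nonneg hnn, div_lt_iff₀ hd]
    nlinarith [mul_pos (mul_pos hd1 hd1) (show (0:ℝ) < 1 + 4 * x ^ 3 by positivity),
      mul_pos (sub_pos.2 hzx3) (pow_pos hx0 6),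
      mul_pos hd1 (pow_pos hx0 6)]
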